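/- Let H_A, H_B, K_A, K_B, L_0, L̃_0 be nonzero finite-dimensional complex Hilbert spaces and let V : H_A ⊗ H_B → K_A ⊗ K_B be a linear map. Suppose V = T_{2,2} ∘ T_{1,2} = T_{2,1} ∘ T_{1,1}, where: T_{1,2} : H_A ⊗ H_B → H_A ⊗ K_B ⊗ L_0 is an isometry with T_{1,2}(a ⊗ 1_{H_B}) = (a ⊗ 1_{K_B} ⊗ 1_{L_0})T_{1,2} for every operator a on H_A, and for every operator b on H_B there is an operator b' on K_B with T_{1,2}(1_{H_A} ⊗ b)T_{1,2}* = 1_{H_A} ⊗ b' ⊗ 1_{L_0}; T_{2,2} : H_A ⊗ K_B ⊗ L_0 → K_A ⊗ K_B is an isometry with T_{2,2}(1_{H_A} ⊗ b ⊗ 1_{L_0}) = (1_{K_A} ⊗ b)T_{2,2} for every operator b on K_B, and for every operator a on H_A there is an operator a' on K_A with T_{2,2}(a ⊗ 1_{K_B} ⊗ 1_{L_0})T_{2,2}* = a' ⊗ 1_{K_B}; T_{1,1} : H_A ⊗ H_B → K_A ⊗ H_B ⊗ L̃_0 is an isometry with T_{1,1}(1_{H_A} ⊗ b) = (1_{K_A}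 ⊗ b ⊗ 1_{L̃_0})T_{1,1} for every operator b on H_B, and for every operator a on H_A there is a' on K_A with T_{1,1}(a ⊗ 1_{H_B})T_{1,1}* = a' ⊗ 1_{H_B} ⊗ 1_{L̃_0}; and T_{2,1} : K_A ⊗ H_B ⊗ L̃_0 → K_A ⊗ K_B is an isometry with T_{2,1}(a ⊗ 1_{H_B} ⊗ 1_{L̃_0}) = (a ⊗ 1_{K_B})T_{2,1} for every operator a on K_A, and for every operator b on H_B there is b' on K_B with T_{2,1}(1_{K_A} ⊗ b ⊗ 1_{L̃_0})T_{2,1}* = 1_{K_A} ⊗ b'. Then there exist isometries V_A : H_A → K_A and V_B : H_B → K_B such that V = V_A ⊗ V_B. -/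

import Mathlib

open Matrix Kronecker

/-- (Matrix formulation, identifying the nonzero finite-dimensional complex Hilbert spaces
`H_A, H_B, K_A, K_B, L_0, L̃_0` with coordinate spaces indexed by `iA, iB, jA, jB, e, f`,
linear maps with matrices, tensor products with Kronecker products, and adjoints with
conjugate transposes.)  A local isometry `V : H_A ⊗ H_B → K_A ⊗ K_B`, i.e. one admitting
commuting factorizations `V = T₂₂ ∘ T₁₂ = T₂₁ ∘ T₁₁` through `H_A ⊗ K_B ⊗ L_0` and
`K_A ⊗ H_B ⊗ L̃_0` by `A`-local and `B`-local isometries, splits: `V = V_A ⊗ V_B` for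
isometries `V_A : H_A → K_A` and `V_B : H_B → K_B`. -/
theorem stmt_5 {iA iB jA jB e f : Type*}
    [Fintype iA] [Fintype iB] [Fintype jA] [Fintype jB] [Fintype e] [Fintype f]
    [DecidableEq iA] [DecidableEq iB] [DecidableEq jA] [DecidableEq jB]
    [DecidableEq e] [DecidableEq f]
    [Nonempty iA] [Nonempty iB] [Nonempty jA] [Nonempty jB] [Nonempty e] [Nonempty f]
    (V : Matrix (jA × jB) (iA × iB) ℂ)
    (T12 : Matrix (iA × (jB × e)) (iA × iB) ℂ)
    (T22 : Matrix (jA × jB) (iA × (jB × e)) ℂ)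
    (T11 : Matrix (jA × (iB × f)) (iA × iB) ℂ)
    (T21 : Matrix (jA × jB) (jA × (iB × f)) ℂ)
    (hV12 : V = T22 * T12) (hV11 : V = T21 * T11)
    (hT12iso : T12ᴴ * T12 = 1)
    (hT12mod : ∀ a : Matrix iA iA ℂ,
        T12 * (a ⊗ₖ (1 : Matrix iB iB ℂ)) = (a ⊗ₖ (1 : Matrix (jB × e) (jB × e) ℂ)) * T12)
    (hT12loc : ∀ b : Matrix iB iB ℂ, ∃ b' : Matrix jB jB ℂ,
        T12 * ((1 : Matrix iA iA ℂ) ⊗ₖ b) * T12ᴴ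
          = (1 : Matrix iA iA ℂ) ⊗ₖ (b' ⊗ₖ (1 : Matrix e e ℂ)))
    (hT22iso : T22ᴴ * T22 = 1)
    (hT22mod : ∀ b : Matrix jB jB ℂ,
        T22 * ((1 : Matrix iA iA ℂ) ⊗ₖ (b ⊗ₖ (1 : Matrix e e ℂ)))
          = ((1 : Matrix jA jA ℂ) ⊗ₖ b) * T22)
    (hT22loc : ∀ a : Matrix iA iA ℂ, ∃ a' : Matrix jA jA ℂ,
        T22 * (a ⊗ₖ (1 : Matrix (jB × e) (jB × e) ℂ)) * T22ᴴ
          = a' ⊗ₖ (1 : Matrix jB jB ℂ))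
    (hT11iso : T11ᴴ * T11 = 1)
    (hT11mod : ∀ b : Matrix iB iB ℂ,
        T11 * ((1 : Matrix iA iA ℂ) ⊗ₖ b)
          = ((1 : Matrix jA jA ℂ) ⊗ₖ (b ⊗ₖ (1 : Matrix f f ℂ))) * T11)
    (hT11loc : ∀ a : Matrix iA iA ℂ, ∃ a' : Matrix jA jA ℂ,
        T11 * (a ⊗ₖ (1 : Matrix iB iB ℂ)) * T11ᴴ
          = a' ⊗ₖ (1 : Matrix (iB × f) (iB × f) ℂ))
    (hT21iso : T21ᴴ * T21 = 1)
    (hT21mod : ∀ a : Matrix jA jA ℂ,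
        T21 * (a ⊗ₖ (1 : Matrix (iB × f) (iB × f) ℂ)) = (a ⊗ₖ (1 : Matrix jB jB ℂ)) * T21)
    (hT21loc : ∀ b : Matrix iB iB ℂ, ∃ b' : Matrix jB jB ℂ,
        T21 * ((1 : Matrix jA jA ℂ) ⊗ₖ (b ⊗ₖ (1 : Matrix f f ℂ))) * T21ᴴ
          = (1 : Matrix jA jA ℂ) ⊗ₖ b') :
    ∃ (VA : Matrix jA iA ℂ) (VB : Matrix jB iB ℂ),
      VAᴴ * VA = 1 ∧ VBᴴ * VB = 1 ∧ V = VA ⊗ₖ VB := by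
  classical
  obtain ⟨k0⟩ := ‹Nonempty iA›
  obtain ⟨m0⟩ := ‹Nonempty iB›
  obtain ⟨q0⟩ := ‹Nonempty jB›
  -- Structure of T12 : it is of the form 1 ⊗ R
  set R : Matrix (jB × e) iB ℂ := fun qs m => T12 (k0, qs) (k0, m) with hRdef
  have hT12e : ∀ x (qs : jB × e) y m, T12 (x,qs) (y,m) = if x = y then R qs m else 0 := by
    intro x qs y m
    have h := congrFun (congrFun (hT12mod (Matrix.single y k0 1)) (x,qs)) (k0,m)
    simp only [hRdef]
    simp [Matrix.mul_apply, Fintype.sum_prod_type, Matrix.single, Matrix.one_apply,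
      ite_and, Finset.sum_ite_eq, Finset.sum_ite_eq', eq_comm] at h
    exact h.symm
  -- Structure of T22 : it is a module map over M_{jB}
  set S : Matrix jA (iA × e) ℂ := fun p ks => T22 (p, q0) (ks.1, (q0, ks.2)) with hSdef
  have hT22e : ∀ p y k q s, T22 (p,y) (k,(q,s)) = if y = q then S p (k,s) else 0 := by
    intro p y k q s
    have h := congrFun (congrFun (hT22mod (Matrix.single q q0 1)) (p,y)) (k,(q0,s))
    simp only [hSdef]
    simp [Matrix.mul_apply, Fintype.sum_prod_type, Matrix.single, Matrix.one_apply,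
      ite_and, Finset.sum_ite_eq, Finset.sum_ite_eq', eq_comm] at h
    exact h.symm
  -- Columns of R are orthonormal
  have hRortho : ∀ m m', (∑ qs : jB × e, (starRingEnd ℂ) (R qs m) * R qs m')
      = if m = m' then 1 else 0 := by
    intro m m'
    have h := congrFun (congrFun hT12iso (k0,m)) (k0,m')
    simp only [Matrix.mul_apply, Matrix.conjTranspose_apply, Matrix.one_apply,
      Fintype.sum_prod_type, Prod.mk.injEq, ite_and] at h
    have h2 : (∑ x : iA, ∑ q : jB, ∑ s : e,
        star (T12 (x, (q,s)) (k0, m)) * T12 (x,(q,s)) (k0, m'))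
        = ∑ qs : jB × e, (starRingEnd ℂ) (R qs m) * R qs m' := by
      simp only [hT12e, Fintype.sum_prod_type, apply_ite (star : ℂ → ℂ), star_zero, ite_mul,
        mul_ite, mul_zero, zero_mul, Finset.sum_ite_eq, Finset.sum_ite_eq',
        Finset.mem_univ, if_true, starRingEnd_apply, ite_self]
      simp [Finset.sum_ite_eq']
    rw [← h2]
    simpa using h
  -- off-support-of-`s₀` entries of R annihilate each other
  have hRzero : ∀ (q : jB) (s : e) (q' : jB) (s' : e), s ≠ s' → ∀ m m',
      R (q,s) m * (starRingEnd ℂ) (R (q',s') m') = 0 := by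
    intro q s q' s' hss m m'
    obtain ⟨b', hb'⟩ := hT12loc (Matrix.single m m' 1)
    have h := congrFun (congrFun hb' (k0,(q,s))) (k0,(q',s'))
    simp only [Matrix.mul_apply, Matrix.conjTranspose_apply, Matrix.kroneckerMap_apply,
      Matrix.one_apply, Fintype.sum_prod_type, Matrix.single, Matrix.of_apply, hT12e,
      starRingEnd_apply] at h ⊢
    simp [ite_and, apply_ite (star : ℂ → ℂ), ite_mul, mul_ite,
      Finset.sum_ite_eq, Finset.sum_ite_eq', hss] at h
    rcases h with h | h <;> simp [h]
  -- there is a nonzero entry of R, in column m0, at ancilla index s0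
  have hex : ∃ qs : jB × e, R qs m0 ≠ 0 := by
    by_contra hc
    push_neg at hc
    have h1 := hRortho m0 m0
    simp [hc] at h1
  obtain ⟨⟨q1, s0⟩, hq1⟩ := hex
  -- all of R is supported on ancilla index s0
  have hRsupp : ∀ (q : jB) (s : e) m, s ≠ s0 → R (q,s) m = 0 := by
    intro q s m hs
    have h0 := hRzero q s q1 s0 hs m m0
    have hne : (starRingEnd ℂ) (R (q1,s0) m0) ≠ 0 := by simpa using hq1
    exact (mul_eq_zero.1 h0).resolve_right hne
  set VA : Matrix jA iA ℂ := fun p k => S p (k, s0) with hVAdef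
  set VB : Matrix jB iB ℂ := fun q m => R (q, s0) m with hVBdef
  -- VB is an isometry
  have hVB : VBᴴ * VB = 1 := by
    ext m m'
    have h2 : (∑ q : jB, (starRingEnd ℂ) (R (q,s0) m) * R (q,s0) m')
        = if m = m' then 1 else 0 := by
      have h1 := hRortho m m'
      simp only [Fintype.sum_prod_type] at h1
      rw [← h1]
      refine Finset.sum_congr rfl fun q _ => ?_
      symm
      refine Fintype.sum_eq_single s0 fun s hs => ?_
      simp [hRsupp q s m' hs]
    simp only [Matrix.mul_apply, Matrix.conjTranspose_apply, Matrix.one_apply, hVBdef,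
      starRingEnd_apply] at h2 ⊢
    exact h2
  -- V factors as a Kronecker product
  have hVeq : V = VA ⊗ₖ VB := by
    ext ⟨p, q⟩ ⟨k, m⟩
    rw [hV12]
    have h3 : (T22 * T12) (p,q) (k,m) = ∑ s : e, S p (k,s) * R (q,s) m := by
      simp only [Matrix.mul_apply, Fintype.sum_prod_type, hT12e, hT22e, ite_mul, mul_ite,
        mul_zero, zero_mul, Finset.sum_ite_irrel, Finset.sum_const_zero,
        Finset.sum_ite_eq, Finset.sum_ite_eq', Finset.mem_univ, if_true]
    rw [h3, Fintype.sum_eq_single s0 fun s hs => by simp [hRsupp q s m hs]]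
    simp [hVAdef, hVBdef, Matrix.kroneckerMap_apply]
    rfl
  -- V is an isometry
  have hViso : Vᴴ * V = 1 := by
    rw [hV12, Matrix.conjTranspose_mul, Matrix.mul_assoc,
      ← Matrix.mul_assoc T22ᴴ T22 T12, hT22iso, Matrix.one_mul, hT12iso]
  -- hence VA is an isometry
  have hVA : VAᴴ * VA = 1 := by
    ext k k'
    have hb : (∑ q : jB, star (VB q m0) * VB q m0) = 1 := by
      have h4 := congrFun (congrFun hVB m0) m0
      simpa [Matrix.mul_apply, Matrix.conjTranspose_apply, Matrix.one_apply] using h4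
    have h := congrFun (congrFun hViso (k, m0)) (k', m0)
    rw [hVeq] at h
    have hx : (∑ p : jA, ∑ q : jB, star ((VA ⊗ₖ VB) (p,q) (k,m0)) * (VA ⊗ₖ VB) (p,q) (k',m0))
        = (∑ p : jA, star (VA p k) * VA p k') * (∑ q : jB, star (VB q m0) * VB q m0) := by
      rw [Finset.sum_mul_sum]
      refine Finset.sum_congr rfl fun p _ => Finset.sum_congr rfl fun q _ => ?_
      simp only [Matrix.kroneckerMap_apply, star_mul']
      ring
    simp only [Matrix.mul_apply, Matrix.conjTranspose_apply, Fintype.sum_prod_type,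
      Matrix.one_apply] at h
    rw [hx, hb, mul_one] at h
    simpa [Matrix.mul_apply, Matrix.conjTranspose_apply, Matrix.one_apply, Prod.ext_iff]
      using h
  exact ⟨VA, VB, hVA, hVB, hVeq⟩
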